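/- Let Φ be the holomorphic function on an open set U ⊇ [0,1) obtained as the locally uniform limit of 4^N P^{∘N}, satisfying Φ(0)=0, Φ'(0)=1 and Φ(P(z)) = Φ(z)/4. Then for every p ∈ (0,1] and every integer i ≥ 0, lim_{N→∞} [ (P^{∘N})^{(i)}(1-p) · p^{i-1} ] / [ (P^{∘N})'(1-p) · i! ] = Φ^{(i)}(1-p) · p^{i-1} / ( Φ'(1-p) · i! ), where (P^{∘N})^{(i)} denotes the i-th derivative of the N-fold iterate of P. -/

import Mathlib

open Filter

/-- The cubic polynomial `P(z) = (z + 2z² + z³)/4`. -/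
noncomputable def P : ℂ → ℂ := fun z => (z + 2 * z ^ 2 + z ^ 3) / 4

noncomputable def Pr : ℝ → ℝ := fun x => (x + 2 * x ^ 2 + x ^ 3) / 4

lemma P_diff : Differentiable ℂ P := by
  unfold P; fun_prop

lemma P_iter_diff (N : ℕ) : Differentiable ℂ (P^[N]) := P_diff.iterate N

lemma deriv_P (z : ℂ) : deriv P z = (1 + 4 * z + 3 * z ^ 2) / 4 := by
  unfold P
  have : deriv (fun z : ℂ => (z + 2 * z ^ 2 + z ^ 3) / 4) z
      = deriv (fun z : ℂ => z + 2 * z ^ 2 + z ^ 3) z / 4 := deriv_div_const _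
  rw [this]
  have h1 : deriv (fun z : ℂ => z + 2 * z ^ 2 + z ^ 3) z = 1 + 4 * z + 3 * z ^ 2 := by
    have := ((differentiable_fun_id.add ((differentiable_const (2:ℂ)).mul (differentiable_pow (𝕜 := ℂ) (𝔸 := ℂ) 2))).add
      (differentiable_pow (𝕜 := ℂ) (𝔸 := ℂ) 3))
    rw [deriv_fun_add ((differentiableAt_fun_id).fun_add ((differentiableAt_const (2:ℂ)).fun_mul
        (differentiableAt_pow (𝕜 := ℂ) (𝔸 := ℂ) 2))) (differentiableAt_pow (𝕜 := ℂ) (𝔸 := ℂ) 3),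
      deriv_fun_add differentiableAt_fun_id ((differentiableAt_const (2:ℂ)).fun_mul (differentiableAt_pow (𝕜 := ℂ) (𝔸 := ℂ) 2)),
      deriv_const_mul _ (differentiableAt_pow (𝕜 := ℂ) (𝔸 := ℂ) 2), deriv_fun_pow (differentiableAt_fun_id (𝕜 := ℂ)) 2,
        deriv_fun_pow (differentiableAt_fun_id (𝕜 := ℂ)) 3, deriv_id'']
    ring
  rw [h1]

lemma P_coe (x : ℝ) : P (x : ℂ) = ((Pr x : ℝ) : ℂ) := by
  unfold P Pr; push_cast; ring

lemma P_iter_coe (N : ℕ) (x : ℝ) : P^[N] (x : ℂ) = ((Pr^[N] x : ℝ) : ℂ) := by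
  induction N with
  | zero => simp
  | succ n ih => rw [Function.iterate_succ_apply', Function.iterate_succ_apply', ih, P_coe]

lemma Pr_mem {x : ℝ} (hx : x ∈ Set.Ico (0:ℝ) 1) : Pr x ∈ Set.Ico (0:ℝ) 1 ∧ Pr x ≤ x * ((1 + x)^2 / 4) := by
  obtain ⟨h0, h1⟩ := hx
  have hPr : Pr x = x * (1 + x)^2 / 4 := by unfold Pr; ring
  have hc : (1 + x)^2 / 4 < 1 := by nlinarith
  refine ⟨⟨by rw [hPr]; positivity, ?_⟩, by rw [hPr]; ring_nf; nlinarith⟩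
  rw [hPr]; nlinarith

lemma Pr_iter_tendsto {x : ℝ} (hx : x ∈ Set.Ico (0:ℝ) 1) :
    (∀ N, Pr^[N] x ∈ Set.Ico (0:ℝ) 1) ∧
    Filter.Tendsto (fun N => Pr^[N] x) atTop (nhds 0) := by
  set c : ℝ := (1 + x)^2 / 4 with hc
  have hc1 : c < 1 := by obtain ⟨h0, h1⟩ := hx; rw [hc]; nlinarith
  have hc0 : 0 ≤ c := by positivity
  have key : ∀ N, Pr^[N] x ∈ Set.Ico (0:ℝ) 1 ∧ Pr^[N] x ≤ x * c ^ N := by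
    intro N
    induction N with
    | zero => exact ⟨hx, by simp⟩
    | succ n ih =>
      obtain ⟨hmem, hle⟩ := ih
      rw [Function.iterate_succ_apply']
      obtain ⟨hmem', hle'⟩ := Pr_mem hmem
      refine ⟨hmem', ?_⟩
      have hmono : (1 + Pr^[n] x)^2 / 4 ≤ c := by
        have h1 : Pr^[n] x ≤ x := le_trans hle (by
          nlinarith [pow_le_one₀ hc0 hc1.le (n := n), hx.1])
        have := hmem.1
        rw [hc]; nlinarith [hx.1]
      calc Pr (Pr^[n] x) ≤ Pr^[n] x * ((1 + Pr^[n] x)^2 / 4) := hle'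
        _ ≤ (x * c ^ n) * c := by
            exact mul_le_mul hle hmono (by positivity)
              (mul_nonneg hx.1 (pow_nonneg hc0 n))
        _ = x * c ^ (n + 1) := by ring
  refine ⟨fun N => (key N).1, ?_⟩
  have h1 : Filter.Tendsto (fun N : ℕ => x * c ^ N) atTop (nhds 0) := by
    simpa using (tendsto_pow_atTop_nhds_zero_of_lt_one hc0 hc1).const_mul x
  apply squeeze_zero (fun N => (key N).1.1) (fun N => (key N).2) h1

theorem stmt9 (U : Set ℂ) (hU : IsOpen U)
    (hIco : ∀ x : ℝ, x ∈ Set.Ico (0 : ℝ) 1 → (x : ℂ) ∈ U)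
    (Φ : ℂ → ℂ) (hΦ : DifferentiableOn ℂ Φ U)
    (hlim : TendstoLocallyUniformlyOn
      (fun (N : ℕ) (z : ℂ) => (4 : ℂ) ^ N * P^[N] z) Φ atTop U)
    (h0 : Φ 0 = 0) (h1 : deriv Φ 0 = 1)
    (hfe : ∀ z ∈ U, Φ (P z) = Φ z / 4)
    (p : ℝ) (hp : p ∈ Set.Ioc (0 : ℝ) 1) (i : ℕ) :
    Tendsto
      (fun N : ℕ =>
        iteratedDeriv i (P^[N]) ((1 : ℂ) - p) * (p : ℂ) ^ ((i : ℤ) - 1) /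
          (deriv (P^[N]) ((1 : ℂ) - p) * (i.factorial : ℂ)))
      atTop
      (nhds (iteratedDeriv i Φ ((1 : ℂ) - p) * (p : ℂ) ^ ((i : ℤ) - 1) /
        (deriv Φ ((1 : ℂ) - p) * (i.factorial : ℂ)))) := by
  obtain ⟨hp0, hp1⟩ := hp
  set x₀ : ℝ := 1 - p with hx₀
  have hx₀mem : x₀ ∈ Set.Ico (0:ℝ) 1 := ⟨by linarith, by linarith⟩
  have hcoe : ((1 : ℂ) - (p:ℂ)) = ((x₀ : ℝ) : ℂ) := by push_cast [hx₀]; ring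
  have hx₀U : ((x₀ : ℝ) : ℂ) ∈ U := hIco x₀ hx₀mem
  -- Step 1: Φ' ≠ 0 at x₀
  have hderivΦ_cont : ContinuousOn (deriv Φ) U :=
    ((hΦ.analyticOnNhd hU).deriv).continuousOn
  -- derivative of functional equation
  have hfe' : ∀ x : ℝ, x ∈ Set.Ico (0:ℝ) 1 →
      deriv Φ ((Pr x : ℝ) : ℂ) * deriv P (x : ℂ) = deriv Φ (x : ℂ) / 4 := by
    intro x hx
    have hxU : ((x:ℝ):ℂ) ∈ U := hIco x hx
    have hPxU : P ((x:ℝ):ℂ) ∈ U := by rw [P_coe]; exact hIco _ (Pr_mem hx).1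
    have heq : (Φ ∘ P) =ᶠ[nhds ((x:ℝ):ℂ)] (fun z => Φ z / 4) := by
      filter_upwards [hU.mem_nhds hxU] with z hz
      exact hfe z hz
    have hd1 : deriv (Φ ∘ P) ((x:ℝ):ℂ) = deriv Φ (P ((x:ℝ):ℂ)) * deriv P ((x:ℝ):ℂ) :=
      deriv_comp _ (hΦ.differentiableAt (hU.mem_nhds hPxU)) (P_diff _)
    have hd2 : deriv (fun z => Φ z / 4) ((x:ℝ):ℂ) = deriv Φ ((x:ℝ):ℂ) / 4 :=
      deriv_div_const _
    rw [← P_coe, ← hd1, heq.deriv_eq, hd2]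
  have hΦ'ne : deriv Φ ((x₀ : ℝ) : ℂ) ≠ 0 := by
    intro habs
    obtain ⟨hmemN, htend⟩ := Pr_iter_tendsto hx₀mem
    have hzero : ∀ N, deriv Φ ((Pr^[N] x₀ : ℝ) : ℂ) = 0 := by
      intro N
      induction N with
      | zero => simpa using habs
      | succ n ih =>
        have := hfe' (Pr^[n] x₀) (hmemN n)
        rw [ih] at this
        have hPne : deriv P ((Pr^[n] x₀ : ℝ) : ℂ) ≠ 0 := by
          have h0 := (hmemN n).1
          have heq : deriv P ((Pr^[n] x₀ : ℝ) : ℂ)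
              = (((1 + 4 * (Pr^[n] x₀) + 3 * (Pr^[n] x₀)^2)/4 : ℝ) : ℂ) := by
            rw [deriv_P]; push_cast; ring
          rw [heq]
          exact Complex.ofReal_ne_zero.mpr (ne_of_gt (by nlinarith))
        rw [zero_div] at this
        rw [Function.iterate_succ_apply']
        rcases mul_eq_zero.mp this with h | h
        · exact h
        · exact absurd h hPne
    have hcont : Filter.Tendsto (fun N => deriv Φ ((Pr^[N] x₀ : ℝ) : ℂ)) atTop
        (nhds (deriv Φ 0)) := by
      have h0U : (0:ℂ) ∈ U := hIco 0 (by constructor <;> norm_num)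
      have hca : ContinuousAt (deriv Φ) 0 :=
        hderivΦ_cont.continuousAt (hU.mem_nhds h0U)
      have hcoe_tend : Filter.Tendsto (fun N => ((Pr^[N] x₀ : ℝ) : ℂ)) atTop (nhds 0) := by
        have := (Complex.continuous_ofReal.tendsto 0).comp htend
        simpa [Function.comp_def] using this
      exact hca.tendsto.comp hcoe_tend
    have : deriv Φ 0 = 0 := tendsto_nhds_unique hcont (by simp [hzero])
    rw [h1] at this; exact one_ne_zero this
  -- Step 2: convergence of iterated derivatives
  have hiterlim : ∀ j : ℕ, TendstoLocallyUniformlyOn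
      (fun (N : ℕ) (z : ℂ) => iteratedDeriv j (fun w => (4:ℂ)^N * P^[N] w) z)
      (iteratedDeriv j Φ) atTop U := by
    intro j
    induction j with
    | zero => simpa [iteratedDeriv_zero] using hlim
    | succ n ih =>
      have hdiff : ∀ N : ℕ, Differentiable ℂ
          (fun z => iteratedDeriv n (fun w => (4:ℂ)^N * P^[N] w) z) := by
        intro N
        have hd : Differentiable ℂ (fun w => (4:ℂ)^N * P^[N] w) :=
          (differentiable_const _).mul (P_iter_diff N)
        exact (hd.contDiff (n := (n+1 : ℕ))).differentiable_iteratedDeriv n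
          (by exact_mod_cast n.lt_succ_self)
      have := ih.deriv (Filter.Eventually.of_forall fun N =>
        (hdiff N).differentiableOn) hU
      simp only [iteratedDeriv_succ]
      exact this
  -- pointwise convergence at x₀
  have hA : Filter.Tendsto (fun N => (4:ℂ)^N * iteratedDeriv i (P^[N]) ((x₀:ℝ):ℂ)) atTop
      (nhds (iteratedDeriv i Φ ((x₀:ℝ):ℂ))) := by
    have := (hiterlim i).tendsto_at hx₀U
    apply this.congr
    intro N
    rw [← iteratedDerivWithin_univ, ← iteratedDerivWithin_univ]
    exact iteratedDerivWithin_const_mul (Set.mem_univ _) uniqueDiffOn_univ _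
      ((P_iter_diff N).contDiff.contDiffWithinAt)
  have hB : Filter.Tendsto (fun N => (4:ℂ)^N * deriv (P^[N]) ((x₀:ℝ):ℂ)) atTop
      (nhds (deriv Φ ((x₀:ℝ):ℂ))) := by
    have := (hiterlim 1).tendsto_at hx₀U
    simp only [iteratedDeriv_one] at this
    apply this.congr
    intro N
    have h2 : iteratedDeriv 1 (fun w => (4:ℂ)^N * P^[N] w) ((x₀:ℝ):ℂ)
        = (4:ℂ)^N * iteratedDeriv 1 (P^[N]) ((x₀:ℝ):ℂ) := by
      rw [← iteratedDerivWithin_univ, ← iteratedDerivWithin_univ]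
      exact iteratedDerivWithin_const_mul (Set.mem_univ _) uniqueDiffOn_univ _
        ((P_iter_diff N).contDiff.contDiffWithinAt)
    simpa [iteratedDeriv_one] using h2
  have hfacne : ((i.factorial : ℂ)) ≠ 0 := by exact_mod_cast i.factorial_ne_zero
  have hne : deriv Φ ((x₀:ℝ):ℂ) * (i.factorial : ℂ) ≠ 0 := mul_ne_zero hΦ'ne hfacne
  have main : Filter.Tendsto
      (fun N => ((4:ℂ)^N * iteratedDeriv i (P^[N]) ((x₀:ℝ):ℂ)) * (p:ℂ) ^ ((i:ℤ)-1) /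
        (((4:ℂ)^N * deriv (P^[N]) ((x₀:ℝ):ℂ)) * (i.factorial : ℂ))) atTop
      (nhds (iteratedDeriv i Φ ((x₀:ℝ):ℂ) * (p:ℂ) ^ ((i:ℤ)-1) /
        (deriv Φ ((x₀:ℝ):ℂ) * (i.factorial : ℂ)))) :=
    Filter.Tendsto.div (hA.mul_const _) (hB.mul_const _) hne
  rw [hcoe]
  apply main.congr
  intro N
  rw [mul_assoc, mul_assoc, mul_div_mul_left _ _ (pow_ne_zero N (by norm_num : (4:ℂ) ≠ 0))]
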